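/- If z₁, z₂ lie in the Carleson square Q(I) with 0 < |I| < 1/2, then the radial projection Π(⟨z₁,z₂⟩) of the hyperbolic geodesic segment joining z₁ and z₂ is contained in I, where Π(z) = z/|z|. -/

import Mathlib

set_option maxHeartbeats 1600000

private lemma im_aux (r x : ℝ) : ((r:ℂ) * Complex.exp ((x:ℂ) * Complex.I)).im = r * Real.sin x := by
  simp [Complex.exp_ofReal_mul_I_re, Complex.mul_im, Complex.exp_ofReal_mul_I_im]

private lemma mul_exp_im (r θ c : ℝ) :
    ((r:ℂ) * Complex.exp ((θ:ℂ) * Complex.I) * Complex.exp ((c:ℂ) * Complex.I)).im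
      = r * Real.sin (θ + c) := by
  rw [mul_assoc, ← Complex.exp_add,
    show (θ:ℂ) * Complex.I + (c:ℂ) * Complex.I = ((θ + c : ℝ):ℂ) * Complex.I by push_cast; ring,
    im_aux]

private lemma of_mul_im (r : ℝ) (x : ℂ) : ((r:ℂ) * x).im = r * x.im := by
  simp

private lemma normSq_key (z w : ℂ) :
    Complex.normSq (1 - (starRingEnd ℂ) z * w) - Complex.normSq (w - z) =
      (1 - Complex.normSq z) * (1 - Complex.normSq w) := by
  simp only [Complex.normSq_apply, Complex.sub_re, Complex.sub_im, Complex.mul_re,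
    Complex.mul_im, Complex.one_re, Complex.one_im, Complex.conj_re, Complex.conj_im]
  ring

private lemma one_sub_ne {x : ℂ} (h : ‖x‖ < 1) : (1:ℂ) - x ≠ 0 := by
  intro h0
  have : x = 1 := by linear_combination -h0
  rw [this] at h; simp at h

private lemma one_add_ne {x : ℂ} (h : ‖x‖ < 1) : (1:ℂ) + x ≠ 0 := by
  intro h0
  have : x = -1 := by linear_combination h0
  rw [this] at h; simp at h

private lemma abs_w0_lt_one {z w : ℂ} (hz : ‖z‖ < 1) (hw : ‖w‖ < 1) :
    ‖(w - z) / (1 - (starRingEnd ℂ) z * w)‖ < 1 := by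
  have hzw : ‖(starRingEnd ℂ) z * w‖ < 1 := by
    rw [norm_mul, Complex.norm_conj]
    nlinarith [norm_nonneg z, norm_nonneg w]
  have hden : (1 : ℂ) - (starRingEnd ℂ) z * w ≠ 0 := one_sub_ne hzw
  have hdenpos : 0 < ‖1 - (starRingEnd ℂ) z * w‖ := by
    simpa [norm_pos_iff] using hden
  rw [norm_div, div_lt_one hdenpos]
  have hz2 : Complex.normSq z < 1 := by
    rw [← Complex.sq_norm]; nlinarith [norm_nonneg z]
  have hw2 : Complex.normSq w < 1 := by
    rw [← Complex.sq_norm]; nlinarith [norm_nonneg w]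
  have h1 : Complex.normSq (w - z) < Complex.normSq (1 - (starRingEnd ℂ) z * w) := by
    nlinarith [normSq_key z w]
  rw [Complex.norm_def, Complex.norm_def]
  exact Real.sqrt_lt_sqrt (Complex.normSq_nonneg _) h1

private lemma geo_halfplane {z w : ℂ} (hz : ‖z‖ < 1) (hw : ‖w‖ < 1)
    (e : ℂ) (hez : 0 ≤ (z * e).im) (hew : 0 ≤ (w * e).im) {t : ℝ} (ht0 : 0 ≤ t) (ht1 : t ≤ 1) :
    0 ≤ ((((t : ℂ) * ((w - z) / (1 - (starRingEnd ℂ) z * w)) + z) /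
      (1 + (starRingEnd ℂ) z * ((t : ℂ) * ((w - z) / (1 - (starRingEnd ℂ) z * w))))) * e).im := by
  have hzw : ‖(starRingEnd ℂ) z * w‖ < 1 := by
    rw [norm_mul, Complex.norm_conj]
    nlinarith [norm_nonneg z, norm_nonneg w]
  have hden : (1 : ℂ) - (starRingEnd ℂ) z * w ≠ 0 := one_sub_ne hzw
  set s : ℂ := (w - z) / (1 - (starRingEnd ℂ) z * w) with hs
  have hs1 : ‖s‖ < 1 := abs_w0_lt_one hz hw
  set D : ℂ := 1 + (starRingEnd ℂ) z * ((t:ℂ) * s) with hDdef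
  have habsD : ‖(starRingEnd ℂ) z * ((t:ℂ) * s)‖ < 1 := by
    rw [norm_mul, norm_mul, Complex.norm_conj, Complex.norm_real, Real.norm_eq_abs, abs_of_nonneg ht0]
    have h1 : t * ‖s‖ ≤ 1 := by nlinarith [norm_nonneg s]
    have h2 : 0 ≤ t * ‖s‖ := mul_nonneg ht0 (norm_nonneg s)
    nlinarith [norm_nonneg z]
  have hDne : D ≠ 0 := one_add_ne habsD
  have hss : s * (starRingEnd ℂ) s = ((Complex.normSq s : ℝ) : ℂ) := Complex.mul_conj s
  have hconjD : (starRingEnd ℂ) D = 1 + z * ((t:ℂ) * (starRingEnd ℂ) s) := by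
    rw [hDdef]; simp [map_add, map_mul, Complex.conj_conj, Complex.conj_ofReal]
  have hmain : (((t:ℂ) * s + z) / D) * e
      = (((t:ℂ) * s + z) * (starRingEnd ℂ) D * e) / ((Complex.normSq D : ℝ) : ℂ) := by
    rw [← Complex.mul_conj]
    have hcD : (starRingEnd ℂ) D ≠ 0 := by simpa using hDne
    field_simp
  rw [hmain, Complex.div_ofReal_im]
  apply div_nonneg _ (Complex.normSq_nonneg D)
  set A : ℂ := (s + z^2 * (starRingEnd ℂ) s) * e with hA
  set c2 : ℝ := t^2 * Complex.normSq s with hc2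
  have hid : ((t:ℂ) * s + z) * (starRingEnd ℂ) D * e
      = (t:ℂ) * A + ((c2 : ℝ):ℂ) * (z * e) + z * e := by
    rw [hconjD, hA, hc2]
    push_cast
    linear_combination (t:ℂ)^2 * z * e * hss
  rw [hid]
  have him : ((t:ℂ) * A + ((c2 : ℝ):ℂ) * (z * e) + z * e).im
      = t * A.im + c2 * (z*e).im + (z*e).im := by
    rw [Complex.add_im, Complex.add_im, of_mul_im, of_mul_im]
  rw [him]
  have hzs : s + z = w * (1 + (starRingEnd ℂ) z * s) := by
    rw [hs]; linear_combination (div_mul_cancel₀ (w - z) hden)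
  have hD1c : (starRingEnd ℂ) (1 + (starRingEnd ℂ) z * s) = 1 + z * (starRingEnd ℂ) s := by
    simp [map_add, map_mul, Complex.conj_conj]
  have h4 : ((Complex.normSq (1 + (starRingEnd ℂ) z * s) : ℝ):ℂ)
      = (1 + (starRingEnd ℂ) z * s) * (1 + z * (starRingEnd ℂ) s) := by
    rw [← hD1c, Complex.mul_conj]
  have hident1 : A + ((Complex.normSq s : ℝ):ℂ) * (z*e) + z*e
      = ((Complex.normSq (1 + (starRingEnd ℂ) z * s) : ℝ):ℂ) * (w * e) := by
    rw [hA, h4]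
    linear_combination (-(z*e)) * hss + e*(1 + z * (starRingEnd ℂ) s) * hzs
  have hF1 : 0 ≤ A.im + Complex.normSq s * (z*e).im + (z*e).im := by
    have h2 := congrArg Complex.im hident1
    rw [Complex.add_im, Complex.add_im, of_mul_im, of_mul_im] at h2
    rw [h2]
    exact mul_nonneg (Complex.normSq_nonneg _) hew
  have hsig : Complex.normSq s < 1 := by
    rw [← Complex.sq_norm]; nlinarith [norm_nonneg s]
  have hsig0 : 0 ≤ Complex.normSq s := Complex.normSq_nonneg s
  rw [hc2]
  nlinarith [mul_nonneg ht0 hF1,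
    mul_nonneg (mul_nonneg hez (sub_nonneg.mpr ht1))
      (sub_nonneg.mpr (show Complex.normSq s * t ≤ 1 by nlinarith))]

/-- The hyperbolic geodesic segment joining `z` and `w` in the unit disc: the image of the
Euclidean segment `[0, (w-z)/(1-z̄w)]` under the Möbius map `u ↦ (u+z)/(1+z̄u)`. -/
noncomputable def geoSeg (z w : ℂ) : Set ℂ :=
  (fun t : ℝ =>
    ((t : ℂ) * ((w - z) / (1 - (starRingEnd ℂ) z * w)) + z) /
      (1 + (starRingEnd ℂ) z * ((t : ℂ) * ((w - z) / (1 - (starRingEnd ℂ) z * w))))) ''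
    Set.Icc (0 : ℝ) 1

/-- `box a ℓ h = {re^{iθ} : θ ∈ [a, a + 2πℓ], 1 - h ≤ r < 1}`; the Carleson square over
the arc of normalized length `ℓ` starting at angle `a` is `box a ℓ ℓ`. -/
def box (a ℓ h : ℝ) : Set ℂ :=
  {z | ∃ r θ : ℝ, 1 - h ≤ r ∧ r < 1 ∧ a ≤ θ ∧ θ ≤ a + 2 * Real.pi * ℓ ∧
    z = (r : ℂ) * Complex.exp (θ * Complex.I)}

theorem radial_projection_geoSeg_subset_arc (a ℓ : ℝ) (hℓ : 0 < ℓ) (hℓ2 : ℓ < 1 / 2)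
    (z₁ z₂ : ℂ) (h₁ : z₁ ∈ box a ℓ ℓ) (h₂ : z₂ ∈ box a ℓ ℓ) :
    ∀ ξ ∈ geoSeg z₁ z₂, ξ ≠ 0 ∧ ∃ θ : ℝ, a ≤ θ ∧ θ ≤ a + 2 * Real.pi * ℓ ∧
      ξ / (‖ξ‖ : ℂ) = Complex.exp (θ * Complex.I) := by
  obtain ⟨r₁, θ₁, hr₁l, hr₁u, hθ₁l, hθ₁u, hz₁⟩ := h₁
  obtain ⟨r₂, θ₂, hr₂l, hr₂u, hθ₂l, hθ₂u, hz₂⟩ := h₂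
  have hπ := Real.pi_pos
  have hr₁0 : 0 < r₁ := by linarith only [hr₁l, hℓ2]
  have hr₂0 : 0 < r₂ := by linarith only [hr₂l, hℓ2]
  have h2πℓ : 2 * Real.pi * ℓ < Real.pi := by
    have h := (mul_lt_mul_iff_right₀ (show (0:ℝ) < 2 * Real.pi by linarith only [hπ])).mpr hℓ2
    linarith only [h]
  have h2πℓ0 : 0 < 2 * Real.pi * ℓ := by positivity
  have habs₁ : ‖z₁‖ = r₁ := by
    rw [hz₁, norm_mul, Complex.norm_real, Real.norm_eq_abs, abs_of_pos hr₁0, Complex.norm_exp_ofReal_mul_I, mul_one]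
  have habs₂ : ‖z₂‖ = r₂ := by
    rw [hz₂, norm_mul, Complex.norm_real, Real.norm_eq_abs, abs_of_pos hr₂0, Complex.norm_exp_ofReal_mul_I, mul_one]
  have hz₁lt : ‖z₁‖ < 1 := by rw [habs₁]; exact hr₁u
  have hz₂lt : ‖z₂‖ < 1 := by rw [habs₂]; exact hr₂u
  have hz₁ne : z₁ ≠ 0 := by
    intro h; rw [h] at habs₁; simp at habs₁; linarith only [habs₁, hr₁0]
  have hz₂ne : z₂ ≠ 0 := by
    intro h; rw [h] at habs₂; simp at habs₂; linarith only [habs₂, hr₂0]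
  -- sine sign facts
  have hsin1a : 0 ≤ Real.sin (θ₁ + -a) :=
    Real.sin_nonneg_of_nonneg_of_le_pi (by linarith only [hθ₁l])
      (by linarith only [hθ₁u, h2πℓ])
  have hsin2a : 0 ≤ Real.sin (θ₂ + -a) :=
    Real.sin_nonneg_of_nonneg_of_le_pi (by linarith only [hθ₂l])
      (by linarith only [hθ₂u, h2πℓ])
  have hsin1b : Real.sin (θ₁ + -(a + 2 * Real.pi * ℓ)) ≤ 0 := by
    have h5 := Real.sin_nonneg_of_nonneg_of_le_pi (x := (a + 2*Real.pi*ℓ) - θ₁)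
      (by linarith only [hθ₁u]) (by linarith only [hθ₁l, h2πℓ])
    rw [show θ₁ + -(a + 2*Real.pi*ℓ) = -((a + 2*Real.pi*ℓ) - θ₁) by ring, Real.sin_neg]
    linarith only [h5]
  have hsin2b : Real.sin (θ₂ + -(a + 2 * Real.pi * ℓ)) ≤ 0 := by
    have h5 := Real.sin_nonneg_of_nonneg_of_le_pi (x := (a + 2*Real.pi*ℓ) - θ₂)
      (by linarith only [hθ₂u]) (by linarith only [hθ₂l, h2πℓ])
    rw [show θ₂ + -(a + 2*Real.pi*ℓ) = -((a + 2*Real.pi*ℓ) - θ₂) by ring, Real.sin_neg]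
    linarith only [h5]
  -- imaginary part facts for the two half-plane directions
  have hE1a : (z₁ * Complex.exp (((-a : ℝ):ℂ) * Complex.I)).im = r₁ * Real.sin (θ₁ + -a) := by
    rw [hz₁, mul_exp_im]
  have hE2a : (z₂ * Complex.exp (((-a : ℝ):ℂ) * Complex.I)).im = r₂ * Real.sin (θ₂ + -a) := by
    rw [hz₂, mul_exp_im]
  have hE1b : (z₁ * Complex.exp (((-(a + 2*Real.pi*ℓ) : ℝ):ℂ) * Complex.I)).im
      = r₁ * Real.sin (θ₁ + -(a + 2*Real.pi*ℓ)) := by rw [hz₁, mul_exp_im]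
  have hE2b : (z₂ * Complex.exp (((-(a + 2*Real.pi*ℓ) : ℝ):ℂ) * Complex.I)).im
      = r₂ * Real.sin (θ₂ + -(a + 2*Real.pi*ℓ)) := by rw [hz₂, mul_exp_im]
  have hI1a : 0 ≤ (z₁ * Complex.exp (((-a : ℝ):ℂ) * Complex.I)).im := by
    rw [hE1a]; exact mul_nonneg hr₁0.le hsin1a
  have hI2a : 0 ≤ (z₂ * Complex.exp (((-a : ℝ):ℂ) * Complex.I)).im := by
    rw [hE2a]; exact mul_nonneg hr₂0.le hsin2a
  have hI1b : (z₁ * Complex.exp (((-(a + 2*Real.pi*ℓ) : ℝ):ℂ) * Complex.I)).im ≤ 0 := by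
    rw [hE1b]; exact mul_nonpos_iff.mpr (Or.inl ⟨hr₁0.le, hsin1b⟩)
  have hI2b : (z₂ * Complex.exp (((-(a + 2*Real.pi*ℓ) : ℝ):ℂ) * Complex.I)).im ≤ 0 := by
    rw [hE2b]; exact mul_nonpos_iff.mpr (Or.inl ⟨hr₂0.le, hsin2b⟩)
  intro ξ hξ
  obtain ⟨t, ht, rfl⟩ := hξ
  obtain ⟨ht0, ht1⟩ := ht
  show ((t:ℂ) * ((z₂ - z₁) / (1 - (starRingEnd ℂ) z₁ * z₂)) + z₁) /
      (1 + (starRingEnd ℂ) z₁ * ((t:ℂ) * ((z₂ - z₁) / (1 - (starRingEnd ℂ) z₁ * z₂)))) ≠ 0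
    ∧ ∃ θ : ℝ, a ≤ θ ∧ θ ≤ a + 2 * Real.pi * ℓ ∧
      ((t:ℂ) * ((z₂ - z₁) / (1 - (starRingEnd ℂ) z₁ * z₂)) + z₁) /
        (1 + (starRingEnd ℂ) z₁ * ((t:ℂ) * ((z₂ - z₁) / (1 - (starRingEnd ℂ) z₁ * z₂)))) /
        ((‖((t:ℂ) * ((z₂ - z₁) / (1 - (starRingEnd ℂ) z₁ * z₂)) + z₁) /
          (1 + (starRingEnd ℂ) z₁ * ((t:ℂ) * ((z₂ - z₁) / (1 - (starRingEnd ℂ) z₁ * z₂))))‖ : ℝ) : ℂ)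
        = Complex.exp ((θ:ℂ) * Complex.I)
  -- denominator facts
  have hzw : ‖(starRingEnd ℂ) z₁ * z₂‖ < 1 := by
    rw [norm_mul, Complex.norm_conj]
    exact lt_of_le_of_lt (mul_le_of_le_one_left (norm_nonneg z₂) hz₁lt.le) hz₂lt
  have hden : (1:ℂ) - (starRingEnd ℂ) z₁ * z₂ ≠ 0 := one_sub_ne hzw
  have hs1 : ‖(z₂ - z₁) / (1 - (starRingEnd ℂ) z₁ * z₂)‖ < 1 :=
    abs_w0_lt_one hz₁lt hz₂lt
  have habsD : ‖(starRingEnd ℂ) z₁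
      * ((t:ℂ) * ((z₂ - z₁) / (1 - (starRingEnd ℂ) z₁ * z₂)))‖ < 1 := by
    rw [norm_mul, norm_mul, Complex.norm_conj, Complex.norm_real, Real.norm_eq_abs, abs_of_nonneg ht0]
    have h1 : t * ‖(z₂ - z₁) / (1 - (starRingEnd ℂ) z₁ * z₂)‖ ≤ 1 :=
      mul_le_one₀ ht1 (norm_nonneg _) hs1.le
    exact lt_of_le_of_lt (mul_le_of_le_one_right (norm_nonneg z₁) h1) hz₁lt
  have hDne : (1:ℂ) + (starRingEnd ℂ) z₁
      * ((t:ℂ) * ((z₂ - z₁) / (1 - (starRingEnd ℂ) z₁ * z₂))) ≠ 0 := one_add_ne habsD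
  -- numerator is nonzero
  have hNne : (t:ℂ) * ((z₂ - z₁) / (1 - (starRingEnd ℂ) z₁ * z₂)) + z₁ ≠ 0 := by
    intro h0
    have hcc : (starRingEnd ℂ) z₁ * z₁ = ((Complex.normSq z₁ : ℝ):ℂ) := by
      rw [mul_comm, Complex.mul_conj]
    have h1 : (t:ℂ) * (z₂ - z₁) = -z₁ * (1 - (starRingEnd ℂ) z₁ * z₂) := by
      have h2 : (t:ℂ) * ((z₂ - z₁) / (1 - (starRingEnd ℂ) z₁ * z₂)) = -z₁ := by
        linear_combination h0
      calc (t:ℂ) * (z₂ - z₁)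
          = ((t:ℂ) * ((z₂ - z₁) / (1 - (starRingEnd ℂ) z₁ * z₂)))
            * (1 - (starRingEnd ℂ) z₁ * z₂) := by rw [mul_assoc, div_mul_cancel₀ _ hden]
        _ = -z₁ * (1 - (starRingEnd ℂ) z₁ * z₂) := by rw [h2]
    have hkey : ((t - Complex.normSq z₁ : ℝ):ℂ) * z₂ = ((t - 1 : ℝ):ℂ) * z₁ := by
      push_cast
      linear_combination h1 + z₂ * hcc
    have hnr : Complex.normSq z₁ = r₁^2 := by rw [← Complex.sq_norm, habs₁]
    have hr2lt : r₁^2 < 1 := by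
      have h := mul_lt_mul' hr₁u.le hr₁u hr₁0.le one_pos
      rw [mul_one] at h
      calc r₁^2 = r₁ * r₁ := sq r₁
        _ < 1 := h
    by_cases hp : t - Complex.normSq z₁ = 0
    · have h6 : ((t - 1:ℝ):ℂ) * z₁ = 0 := by rw [← hkey, hp]; simp
      rcases mul_eq_zero.mp h6 with h7 | h7
      · have h8 : t = 1 := by
          have := Complex.ofReal_eq_zero.mp h7; linarith only [this]
        linarith only [h8, hp, hnr, hr2lt]
      · exact hz₁ne h7
    · have habs2 : |t - Complex.normSq z₁| * r₂ = |t - 1| * r₁ := by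
        have h9 := congrArg (‖·‖) hkey
        rwa [norm_mul, norm_mul, Complex.norm_real, Real.norm_eq_abs, Complex.norm_real, Real.norm_eq_abs, habs₁, habs₂] at h9
      rcases lt_or_gt_of_ne hp with hplt | hpgt
      · -- t < normSq z₁ : impossible by sizes
        rw [abs_of_neg (show t - Complex.normSq z₁ < 0 by linarith only [hplt]),
          abs_of_nonpos (show t - 1 ≤ 0 by linarith only [ht1])] at habs2
        have e1 : (Complex.normSq z₁ - t) * r₂ = (1 - t) * r₁ := by
          linear_combination habs2
        have e2 : (Complex.normSq z₁ - t) * r₂ < (Complex.normSq z₁ - t) * 1 :=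
          mul_lt_mul_of_pos_left hr₂u (show (0:ℝ) < Complex.normSq z₁ - t by
            linarith only [hplt])
        have e3 : Complex.normSq z₁ - t < (1 - t) * r₁ := by
          have h := mul_pos (show (0:ℝ) < 1 - r₁ by linarith only [hr₁u])
            (show (0:ℝ) < r₁ + t by linarith only [hr₁0, ht0])
          have h2 : (1 - r₁) * (r₁ + t) = (1 - t) * r₁ - (r₁^2 - t) := by ring
          rw [hnr]
          linarith only [h, h2]
        linarith only [e1, e2, e3]
      · -- t > normSq z₁ : z₂ is a nonpositive multiple of z₁, impossible by angles
        rcases eq_or_lt_of_le ht1 with ht1e | ht1lt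
        · -- t = 1 forces z₂ = 0
          have h10 : ((t - Complex.normSq z₁ : ℝ):ℂ) * z₂ = 0 := by
            rw [hkey, ← ht1e]; norm_num
          rcases mul_eq_zero.mp h10 with h11 | h11
          · exact hp (Complex.ofReal_eq_zero.mp h11)
          · exact hz₂ne h11
        · -- t < 1
          have hImA : (t - Complex.normSq z₁) * (z₂ * Complex.exp (((-a : ℝ):ℂ) * Complex.I)).im
              = (t - 1) * (z₁ * Complex.exp (((-a : ℝ):ℂ) * Complex.I)).im := by
            have h12 := congrArg
              (fun x => (x * Complex.exp (((-a : ℝ):ℂ) * Complex.I)).im) hkey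
            simpa [mul_assoc, of_mul_im] using h12
          have hImB : (t - Complex.normSq z₁)
                * (z₂ * Complex.exp (((-(a + 2*Real.pi*ℓ) : ℝ):ℂ) * Complex.I)).im
              = (t - 1) * (z₁ * Complex.exp (((-(a + 2*Real.pi*ℓ) : ℝ):ℂ) * Complex.I)).im := by
            have h12 := congrArg
              (fun x => (x * Complex.exp (((-(a + 2*Real.pi*ℓ) : ℝ):ℂ) * Complex.I)).im) hkey
            simpa [mul_assoc, of_mul_im] using h12
          have hX1 : (z₁ * Complex.exp (((-a : ℝ):ℂ) * Complex.I)).im = 0 := by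
            have hge : 0 ≤ (t - 1) * (z₁ * Complex.exp (((-a : ℝ):ℂ) * Complex.I)).im := by
              rw [← hImA]
              exact mul_nonneg (show (0:ℝ) ≤ t - Complex.normSq z₁ by
                linarith only [hpgt]) hI2a
            have hle : (z₁ * Complex.exp (((-a : ℝ):ℂ) * Complex.I)).im ≤ 0 := by
              by_contra hc
              push_neg at hc
              have := mul_neg_of_neg_of_pos (show t - 1 < 0 by linarith only [ht1lt]) hc
              linarith only [hge, this]
            exact le_antisymm hle hI1a
          have hsin0 : Real.sin (θ₁ + -a) = 0 := by
            rw [hE1a] at hX1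
            rcases mul_eq_zero.mp hX1 with h | h
            · exact absurd h (ne_of_gt hr₁0)
            · exact h
          have hθ₁a : θ₁ = a := by
            by_contra hne
            have hgt : a < θ₁ := lt_of_le_of_ne hθ₁l (Ne.symm hne)
            have := Real.sin_pos_of_pos_of_lt_pi (show 0 < θ₁ + -a by linarith only [hgt])
              (show θ₁ + -a < Real.pi by linarith only [hθ₁u, h2πℓ])
            linarith only [this, hsin0]
          have hsinposℓ : 0 < Real.sin (2 * Real.pi * ℓ) :=
            Real.sin_pos_of_pos_of_lt_pi h2πℓ0 h2πℓ
          have hX1b : (z₁ * Complex.exp (((-(a + 2*Real.pi*ℓ) : ℝ):ℂ) * Complex.I)).im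
              = -(r₁ * Real.sin (2*Real.pi*ℓ)) := by
            rw [hE1b, hθ₁a, show a + -(a + 2*Real.pi*ℓ) = -(2*Real.pi*ℓ) by ring,
              Real.sin_neg]
            ring
          have hrhs : 0 < (t - 1)
              * (z₁ * Complex.exp (((-(a + 2*Real.pi*ℓ) : ℝ):ℂ) * Complex.I)).im := by
            rw [hX1b, show (t - 1) * -(r₁ * Real.sin (2*Real.pi*ℓ))
              = (1 - t) * r₁ * Real.sin (2*Real.pi*ℓ) by ring]
            exact mul_pos (mul_pos (show (0:ℝ) < 1 - t by linarith only [ht1lt]) hr₁0)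
              hsinposℓ
          have hmn : (t - Complex.normSq z₁)
              * (z₂ * Complex.exp (((-(a + 2*Real.pi*ℓ) : ℝ):ℂ) * Complex.I)).im ≤ 0 :=
            mul_nonpos_iff.mpr (Or.inl
              ⟨show (0:ℝ) ≤ t - Complex.normSq z₁ by linarith only [hpgt], hI2b⟩)
          linarith only [hImB, hrhs, hmn]
  -- half-plane bounds for the geodesic point
  have hgeoA := geo_halfplane hz₁lt hz₂lt (Complex.exp (((-a : ℝ):ℂ) * Complex.I))
    hI1a hI2a ht0 ht1
  have hI1b' : 0 ≤ (z₁ * -Complex.exp (((-(a + 2*Real.pi*ℓ) : ℝ):ℂ) * Complex.I)).im := by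
    rw [mul_neg, Complex.neg_im]
    linarith only [hI1b]
  have hI2b' : 0 ≤ (z₂ * -Complex.exp (((-(a + 2*Real.pi*ℓ) : ℝ):ℂ) * Complex.I)).im := by
    rw [mul_neg, Complex.neg_im]
    linarith only [hI2b]
  have hgeoB := geo_halfplane hz₁lt hz₂lt
    (-Complex.exp (((-(a + 2*Real.pi*ℓ) : ℝ):ℂ) * Complex.I)) hI1b' hI2b' ht0 ht1
  set ξ := ((t:ℂ) * ((z₂ - z₁) / (1 - (starRingEnd ℂ) z₁ * z₂)) + z₁) /
      (1 + (starRingEnd ℂ) z₁ * ((t:ℂ) * ((z₂ - z₁) / (1 - (starRingEnd ℂ) z₁ * z₂)))) with hξdef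
  have hξne : ξ ≠ 0 := div_ne_zero hNne hDne
  have hgeoB' : (ξ * Complex.exp (((-(a + 2*Real.pi*ℓ) : ℝ):ℂ) * Complex.I)).im ≤ 0 := by
    rw [mul_neg, Complex.neg_im] at hgeoB
    linarith only [hgeoB]
  have habspos : 0 < ‖ξ‖ := norm_pos_iff.mpr hξne
  refine ⟨hξne, ?_⟩
  set m := a + Real.pi * ℓ with hm
  set φ := (ξ * Complex.exp (((-m : ℝ):ℂ) * Complex.I)).arg with hφ
  have habsm : ‖ξ * Complex.exp (((-m : ℝ):ℂ) * Complex.I)‖ = ‖ξ‖ := by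
    rw [norm_mul, Complex.norm_exp_ofReal_mul_I, mul_one]
  have hexp : ξ * Complex.exp (((-m : ℝ):ℂ) * Complex.I)
      = ((‖ξ‖ : ℝ):ℂ) * Complex.exp ((φ:ℂ) * Complex.I) := by
    rw [hφ, ← habsm]
    exact (Complex.norm_mul_exp_arg_mul_I _).symm
  have hξval : ξ = ((‖ξ‖ : ℝ):ℂ) * Complex.exp (((m + φ : ℝ):ℂ) * Complex.I) := by
    have h6 : ξ * (Complex.exp (((-m:ℝ):ℂ) * Complex.I) * Complex.exp ((m:ℂ) * Complex.I))
        = ((‖ξ‖:ℝ):ℂ)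
          * (Complex.exp ((φ:ℂ) * Complex.I) * Complex.exp ((m:ℂ) * Complex.I)) := by
      rw [← mul_assoc, hexp, mul_assoc]
    rw [← Complex.exp_add, ← Complex.exp_add,
      show ((-m:ℝ):ℂ) * Complex.I + (m:ℂ) * Complex.I = 0 by push_cast; ring,
      Complex.exp_zero, mul_one,
      show (φ:ℂ) * Complex.I + (m:ℂ) * Complex.I = ((m + φ : ℝ):ℂ) * Complex.I by
        push_cast; ring] at h6
    exact h6
  have hsA : 0 ≤ ‖ξ‖ * Real.sin ((m + φ) + -a) := by
    rw [hξval, mul_exp_im] at hgeoA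
    exact hgeoA
  have hsinA : 0 ≤ Real.sin (φ + Real.pi * ℓ) := by
    have h8 : (m + φ) + -a = φ + Real.pi * ℓ := by rw [hm]; ring
    rw [h8] at hsA
    by_contra hc
    push_neg at hc
    have := mul_neg_of_pos_of_neg habspos hc
    linarith only [hsA, this]
  have hsB : ‖ξ‖ * Real.sin ((m + φ) + -(a + 2*Real.pi*ℓ)) ≤ 0 := by
    rw [hξval, mul_exp_im] at hgeoB'
    exact hgeoB'
  have hsinB : Real.sin (φ - Real.pi * ℓ) ≤ 0 := by
    have h8 : (m + φ) + -(a + 2*Real.pi*ℓ) = φ - Real.pi * ℓ := by rw [hm]; ring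
    rw [h8] at hsB
    by_contra hc
    push_neg at hc
    have := mul_pos habspos hc
    linarith only [hsB, this]
  have hφle : φ ≤ Real.pi := by rw [hφ]; exact Complex.arg_le_pi _
  have hφgt : -Real.pi < φ := by rw [hφ]; exact Complex.neg_pi_lt_arg _
  have hd0 : 0 < Real.pi * ℓ := by positivity
  have hφub : φ ≤ Real.pi * ℓ := by
    by_contra hcon
    push_neg at hcon
    have := Real.sin_pos_of_pos_of_lt_pi
      (show 0 < φ - Real.pi * ℓ by linarith only [hcon])
      (show φ - Real.pi * ℓ < Real.pi by linarith only [hφle, hd0])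
    linarith only [this, hsinB]
  have hφlb : -(Real.pi * ℓ) ≤ φ := by
    by_contra hcon
    push_neg at hcon
    have := Real.sin_neg_of_neg_of_neg_pi_lt
      (show φ + Real.pi * ℓ < 0 by linarith only [hcon])
      (show -Real.pi < φ + Real.pi * ℓ by linarith only [hφgt, hd0])
    linarith only [this, hsinA]
  refine ⟨m + φ, by rw [hm]; linarith only [hφlb], by rw [hm]; linarith only [hφub], ?_⟩
  rw [div_eq_iff (show ((‖ξ‖ : ℝ):ℂ) ≠ 0 from Complex.ofReal_ne_zero.mpr habspos.ne')]
  conv_lhs => rw [hξval]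
  rw [mul_comm]
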